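/- In Routh's configuration with x=7, y=4, z=1, the Routh triangle PQR has area equal to 1/4 of the area of triangle ABC. -/
import Mathlib
set_option maxHeartbeats 1000000

noncomputable def signedArea (P Q R : ℝ × ℝ) : ℝ :=
  ((Q.1 - P.1) * (R.2 - P.2) - (R.1 - P.1) * (Q.2 - P.2)) / 2

def onLine (P A B : ℝ × ℝ) : Prop := P ∈ affineSpan ℝ ({A, B} : Set (ℝ × ℝ))

lemma indep_aux {u1 u2 v1 v2 a b : ℝ}
    (hd : u1 * v2 - v1 * u2 ≠ 0)
    (h1 : a * u1 + b * v1 = 0) (h2 : a * u2 + b * v2 = 0) :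
    a = 0 ∧ b = 0 := by
  constructor
  · have : a * (u1 * v2 - v1 * u2) = 0 := by linear_combination v2 * h1 - v1 * h2
    rcases mul_eq_zero.mp this with h | h
    · exact h
    · exact absurd h hd
  · have : b * (u1 * v2 - v1 * u2) = 0 := by linear_combination u1 * h2 - u2 * h1
    rcases mul_eq_zero.mp this with h | h
    · exact h
    · exact absurd h hd

lemma not_collinear_det {A B C : ℝ × ℝ}
    (h : ¬ Collinear ℝ ({A, B, C} : Set (ℝ × ℝ))) :
    (B.1 - A.1) * (C.2 - A.2) - (C.1 - A.1) * (B.2 - A.2) ≠ 0 := by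
  intro hd
  apply h
  rw [collinear_iff_exists_forall_eq_smul_vadd]
  by_cases hu : B = A
  · refine ⟨A, C - A, ?_⟩
    intro p hp
    rcases hp with rfl | rfl | rfl
    · exact ⟨0, by simp⟩
    · exact ⟨0, by simp [hu]⟩
    · exact ⟨1, by simp⟩
  · refine ⟨A, B - A, ?_⟩
    have hne : B.1 - A.1 ≠ 0 ∨ B.2 - A.2 ≠ 0 := by
      by_contra hc
      push_neg at hc
      apply hu
      have h1 : B.1 = A.1 := by linarith [hc.1]
      have h2 : B.2 = A.2 := by linarith [hc.2]
      exact Prod.ext h1 h2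
    intro p hp
    rcases hp with rfl | rfl | rfl
    · exact ⟨0, by simp⟩
    · exact ⟨1, by simp⟩
    · rcases hne with h1 | h2
      · refine ⟨(p.1 - A.1) / (B.1 - A.1), ?_⟩
        have hc2 : p.2 - A.2 = (p.1 - A.1) / (B.1 - A.1) * (B.2 - A.2) := by
          field_simp
          linarith [hd]
        have hc1 : p.1 - A.1 = (p.1 - A.1) / (B.1 - A.1) * (B.1 - A.1) := by
          field_simp
        apply Prod.ext <;> simp [Prod.smul_fst, Prod.smul_snd] <;> linarith [hc1, hc2]
      · refine ⟨(p.2 - A.2) / (B.2 - A.2), ?_⟩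
        have hc1 : p.1 - A.1 = (p.2 - A.2) / (B.2 - A.2) * (B.1 - A.1) := by
          field_simp
          linarith [hd]
        have hc2 : p.2 - A.2 = (p.2 - A.2) / (B.2 - A.2) * (B.2 - A.2) := by
          field_simp
        apply Prod.ext <;> simp [Prod.smul_fst, Prod.smul_snd] <;> linarith [hc1, hc2]

lemma onLine_param {P A B : ℝ × ℝ} (h : onLine P A B) :
    ∃ r : ℝ, r • (B - A) = P - A := by
  rw [onLine] at h
  have h2 : (P - A) +ᵥ A ∈ line[ℝ, A, B] := by
    simpa using h
  have := (vadd_left_mem_affineSpan_pair (k := ℝ) (p₁ := A) (p₂ := B) (v := P - A)).mp h2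
  simpa using this

/-- Routh's configuration with x=7, y=4, z=1. -/
theorem routh_7_4_1 (A B C Ax By Cz P Q R : ℝ × ℝ)
    (hABC : ¬ Collinear ℝ ({A, B, C} : Set (ℝ × ℝ)))
    (hAx : Ax - B = (7 : ℝ) • (C - Ax))
    (hBy : By - C = (4 : ℝ) • (A - By))
    (hCz : Cz - A = (1 : ℝ) • (B - Cz))
    (hP1 : onLine P A Ax) (hP2 : onLine P B By)
    (hQ1 : onLine Q B By) (hQ2 : onLine Q C Cz)
    (hR1 : onLine R C Cz) (hR2 : onLine R A Ax) :
    |signedArea P Q R| = (1/4 : ℝ) * |signedArea A B C| := by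
  have hd := not_collinear_det hABC
  -- coordinates of the cevian feet
  have hAx1 : Ax.1 = (B.1 + 7 * C.1) / 8 := by
    have := congrArg Prod.fst hAx; simp [Prod.smul_fst] at this; linarith
  have hAx2 : Ax.2 = (B.2 + 7 * C.2) / 8 := by
    have := congrArg Prod.snd hAx; simp [Prod.smul_snd] at this; linarith
  have hBy1 : By.1 = (C.1 + 4 * A.1) / 5 := by
    have := congrArg Prod.fst hBy; simp [Prod.smul_fst] at this; linarith
  have hBy2 : By.2 = (C.2 + 4 * A.2) / 5 := by
    have := congrArg Prod.snd hBy; simp [Prod.smul_snd] at this; linarith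
  have hCz1 : Cz.1 = (A.1 + B.1) / 2 := by
    have := congrArg Prod.fst hCz; simp [Prod.smul_fst] at this; linarith
  have hCz2 : Cz.2 = (A.2 + B.2) / 2 := by
    have := congrArg Prod.snd hCz; simp [Prod.smul_snd] at this; linarith
  -- parametrizations
  obtain ⟨s, hs⟩ := onLine_param hP1
  obtain ⟨t, ht⟩ := onLine_param hP2
  obtain ⟨t', ht'⟩ := onLine_param hQ1
  obtain ⟨r', hr'⟩ := onLine_param hQ2
  obtain ⟨r'', hr''⟩ := onLine_param hR1
  obtain ⟨s'', hs''⟩ := onLine_param hR2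
  have hs1 : s * (Ax.1 - A.1) = P.1 - A.1 := by
    have := congrArg Prod.fst hs; simpa [Prod.smul_fst] using this
  have hs2 : s * (Ax.2 - A.2) = P.2 - A.2 := by
    have := congrArg Prod.snd hs; simpa [Prod.smul_snd] using this
  have ht1 : t * (By.1 - B.1) = P.1 - B.1 := by
    have := congrArg Prod.fst ht; simpa [Prod.smul_fst] using this
  have ht2 : t * (By.2 - B.2) = P.2 - B.2 := by
    have := congrArg Prod.snd ht; simpa [Prod.smul_snd] using this
  have ht'1 : t' * (By.1 - B.1) = Q.1 - B.1 := by
    have := congrArg Prod.fst ht'; simpa [Prod.smul_fst] using this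
  have ht'2 : t' * (By.2 - B.2) = Q.2 - B.2 := by
    have := congrArg Prod.snd ht'; simpa [Prod.smul_snd] using this
  have hr'1 : r' * (Cz.1 - C.1) = Q.1 - C.1 := by
    have := congrArg Prod.fst hr'; simpa [Prod.smul_fst] using this
  have hr'2 : r' * (Cz.2 - C.2) = Q.2 - C.2 := by
    have := congrArg Prod.snd hr'; simpa [Prod.smul_snd] using this
  have hr''1 : r'' * (Cz.1 - C.1) = R.1 - C.1 := by
    have := congrArg Prod.fst hr''; simpa [Prod.smul_fst] using this
  have hr''2 : r'' * (Cz.2 - C.2) = R.2 - C.2 := by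
    have := congrArg Prod.snd hr''; simpa [Prod.smul_snd] using this
  have hs''1 : s'' * (Ax.1 - A.1) = R.1 - A.1 := by
    have := congrArg Prod.fst hs''; simpa [Prod.smul_fst] using this
  have hs''2 : s'' * (Ax.2 - A.2) = R.2 - A.2 := by
    have := congrArg Prod.snd hs''; simpa [Prod.smul_snd] using this
  rw [hAx1] at hs1 hs''1
  rw [hAx2] at hs2 hs''2
  rw [hBy1] at ht1 ht'1
  rw [hBy2] at ht2 ht'2
  rw [hCz1] at hr'1 hr''1
  rw [hCz2] at hr'2 hr''2
  -- solve for P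
  have hPab := indep_aux hd
    (a := s/8 - 1 + t) (b := 7*s/8 - t/5)
    (by linear_combination hs1 - ht1) (by linear_combination hs2 - ht2)
  have hsP : s = 2/9 := by
    obtain ⟨ha, hb⟩ := hPab; linarith
  -- solve for Q
  have hQab := indep_aux hd
    (a := 1 - t' - r'/2) (b := t'/5 + r' - 1)
    (by linear_combination ht'1 - hr'1) (by linear_combination ht'2 - hr'2)
  have htQ : t' = 5/9 := by
    obtain ⟨ha, hb⟩ := hQab; linarith
  -- solve for R
  have hRab := indep_aux hd
    (a := s''/8 - r''/2) (b := 7*s''/8 + r'' - 1)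
    (by linear_combination hs''1 - hr''1) (by linear_combination hs''2 - hr''2)
  have hsR : s'' = 8/9 := by
    obtain ⟨ha, hb⟩ := hRab; linarith
  -- coordinates of P, Q, R
  have hP1' : P.1 = A.1 + ((B.1 - A.1) + 7 * (C.1 - A.1)) / 36 := by
    rw [hsP] at hs1; linarith
  have hP2' : P.2 = A.2 + ((B.2 - A.2) + 7 * (C.2 - A.2)) / 36 := by
    rw [hsP] at hs2; linarith
  have hQ1' : Q.1 = A.1 + (4 * (B.1 - A.1) + (C.1 - A.1)) / 9 := by
    rw [htQ] at ht'1; linarith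
  have hQ2' : Q.2 = A.2 + (4 * (B.2 - A.2) + (C.2 - A.2)) / 9 := by
    rw [htQ] at ht'2; linarith
  have hR1' : R.1 = A.1 + ((B.1 - A.1) + 7 * (C.1 - A.1)) / 9 := by
    rw [hsR] at hs''1; linarith
  have hR2' : R.2 = A.2 + ((B.2 - A.2) + 7 * (C.2 - A.2)) / 9 := by
    rw [hsR] at hs''2; linarith
  have key : signedArea P Q R = (1/4 : ℝ) * signedArea A B C := by
    simp only [signedArea]
    rw [hP1', hP2', hQ1', hQ2', hR1', hR2']
    ring
  rw [key, abs_mul]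
  norm_num
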